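/- Let β > 2 be a non-integer and define the map T on I_β = [0, ⌊β⌋/(β−1)] by T(x) = βx − k for x ∈ [z_k, z_{k+1}) (with T(x) = βx on [0,z_1) and T(x) = βx − ⌊β⌋ on [z_{⌊β⌋}, ⌊β⌋/(β−1)]), where z_k are as in the symmetric partition. Then T commutes with the reflection σ(x) = ⌊β⌋/(β−1) − x up to the partition: for every x that is not a preimage under iterates of T of a partition point z_k, and every n ≥ 0 and k ∈ {0,...,⌊β⌋}, T^n(x) ∈ (z_k, z_{k+1}) if and only if T^n(σ(x)) ∈ (z_{⌊β⌋−k}, z_{⌈β⌉−k}). -/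

import Mathlib

set_option maxHeartbeats 2000000 in


theorem stmt14 (β : ℝ) (hβ : 2 < β) (hni : ∀ n : ℕ, β ≠ n)
    (z : ℕ → ℝ)
    (hz0 : z 0 = (⌊β⌋₊ : ℝ) / (2 * (β - 1)) - 1 / 2)
    (hzk : ∀ k : ℕ, 1 ≤ k → k ≤ ⌊β⌋₊ →
      z k = ((⌊β⌋₊ : ℝ) / (β - 1) - ((⌊β⌋₊ : ℝ) - 1) / β) / 2 + ((k : ℝ) - 1) / β)
    (hztop : z (⌊β⌋₊ + 1) = z 0 + 1)
    (T : ℝ → ℝ)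
    (hT0 : ∀ x : ℝ, x < z 1 → T x = β * x)
    (hTk : ∀ x : ℝ, ∀ k : ℕ, 1 ≤ k → k ≤ ⌊β⌋₊ - 1 →
      x ∈ Set.Ico (z k) (z (k + 1)) → T x = β * x - k)
    (hTtop : ∀ x : ℝ, z ⌊β⌋₊ ≤ x → T x = β * x - ⌊β⌋₊)
    (x : ℝ) (hx : x ∈ Set.Icc 0 ((⌊β⌋₊ : ℝ) / (β - 1)))
    (hgen : ∀ n : ℕ, ∀ k ≤ ⌊β⌋₊ + 1, T^[n] x ≠ z k) :
    ∀ n : ℕ, ∀ k ≤ ⌊β⌋₊,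
      (T^[n] x ∈ Set.Ioo (z k) (z (k + 1)) ↔
        T^[n] ((⌊β⌋₊ : ℝ) / (β - 1) - x) ∈ Set.Ioo (z (⌊β⌋₊ - k)) (z (⌊β⌋₊ - k + 1))) := by
  have hβ0 : (0:ℝ) < β := by linarith
  have hβ1 : (0:ℝ) < β - 1 := by linarith
  have hbne : (β:ℝ) ≠ 0 := ne_of_gt hβ0
  set M := ⌊β⌋₊ with hMdef
  have hMle : (M : ℝ) ≤ β := Nat.floor_le hβ0.le
  have hMlt : (M : ℝ) < β := lt_of_le_of_ne hMle fun h => hni M h.symm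
  have hβM : β < (M : ℝ) + 1 := Nat.lt_floor_add_one β
  have hM2 : 2 ≤ M := Nat.le_floor (by exact_mod_cast hβ.le)
  have hm2 : (2:ℝ) ≤ (M:ℝ) := by exact_mod_cast hM2
  set L : ℝ := (M:ℝ)/(β-1) with hLdef
  have hL1 : 1 < L := by
    rw [hLdef, lt_div_iff₀ hβ1]; linarith
  have hβL : β * L = L + M := by
    rw [hLdef]; field_simp; ring
  set C : ℝ := (L - ((M:ℝ)-1)/β)/2 with hCdef
  have hzv : ∀ k : ℕ, 1 ≤ k → k ≤ M → z k = C + ((k:ℝ)-1)/β := hzk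
  have hβC : β * C = (L+1)/2 := by
    have hmc : β * (((M:ℝ)-1)/β) = (M:ℝ) - 1 := mul_div_cancel₀ _ hbne
    rw [hCdef]; linear_combination hβL/2 - hmc/2
  have hz0' : z 0 = (L-1)/2 := by
    rw [hz0, hLdef]; field_simp
  have hztop' : z (M+1) = (L+1)/2 := by
    rw [hztop, hz0']; ring
  have hβz : ∀ k : ℕ, 1 ≤ k → k ≤ M → β * z k = (L+1)/2 + (k:ℝ) - 1 := by
    intro k h1 h2
    rw [hzv k h1 h2, mul_add, hβC, mul_div_cancel₀ _ hbne]; ring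
  have hz1 : z 1 = C := by
    rw [hzv 1 le_rfl (by omega)]; norm_num
  have hsym : ∀ j, j ≤ M + 1 → z j + z (M+1-j) = L := by
    intro j hj
    rcases Nat.eq_zero_or_pos j with h0 | h1
    · subst h0; simp only [Nat.sub_zero]
      rw [hz0', hztop']; ring
    · rcases eq_or_lt_of_le hj with htop | hlt
      · subst htop
        simp only [Nat.sub_self]
        rw [hz0', hztop']; ring
      · have hjM : j ≤ M := by omega
        have h1' : 1 ≤ M + 1 - j := by omega
        have h2' : M + 1 - j ≤ M := by omega
        rw [hzv j h1 hjM, hzv (M+1-j) h1' h2']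
        have hc : ((M + 1 - j : ℕ) : ℝ) = (M:ℝ) + 1 - j := by
          push_cast [Nat.cast_sub hj]; ring
        rw [hc, hCdef]
        field_simp
        ring
  have key : ∀ y, y ∈ Set.Icc 0 L → (∀ k, k ≤ M + 1 → y ≠ z k) →
      T (L - y) = L - T y ∧ T y ∈ Set.Icc 0 L := by
    intro y hy hne
    obtain ⟨hy0, hyL⟩ := hy
    have hsym1 : z 1 + z M = L := by
      have := hsym 1 (by omega)
      simpa using this
    rcases lt_trichotomy y (z 1) with hc1 | hc1 | hc1
    · -- y < z 1
      have hTy : T y = β * y := hT0 y hc1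
      have hσ : z M ≤ L - y := by linarith
      have hTσ : T (L - y) = β * (L - y) - M := hTtop _ hσ
      have hβz1 : β * z 1 = (L+1)/2 := by
        have := hβz 1 le_rfl (by omega); push_cast at this; linarith
      have hmul : β * y < β * z 1 := by
        exact mul_lt_mul_of_pos_left hc1 hβ0
      refine ⟨by rw [hTy, hTσ]; linarith, ?_, ?_⟩
      · rw [hTy]; positivity
      · rw [hTy]; linarith
    · exact absurd hc1 (hne 1 (by omega))
    · rcases lt_trichotomy y (z M) with hcM | hcM | hcM
      · -- z 1 < y < z M : middle branch
        have hyC : z 1 < y := hc1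
        rw [hz1] at hyC
        have hpos : 0 ≤ (y - C) * β := by nlinarith
        set j := ⌊(y - C) * β⌋₊ with hjdef
        have hfl : (j:ℝ) ≤ (y - C) * β := Nat.floor_le hpos
        have hfu : (y - C) * β < (j:ℝ) + 1 := Nat.lt_floor_add_one _
        have hzM : z M = C + ((M:ℝ)-1)/β := hzv M (by omega) le_rfl
        have hjlt : j < M - 1 := by
          rw [hjdef]
          rw [Nat.floor_lt hpos]
          have : ((M - 1 : ℕ):ℝ) = (M:ℝ) - 1 := by
            push_cast [Nat.cast_sub (by omega : 1 ≤ M)]; ring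
          rw [this]
          rw [hzM] at hcM
          have := (lt_div_iff₀ hβ0).mp (by linarith : y - C < ((M:ℝ)-1)/β)
          linarith
        set k := j + 1 with hkdef
        have hk1 : 1 ≤ k := by omega
        have hkM1 : k ≤ M - 1 := by omega
        have hkM : k ≤ M := by omega
        have hzkv : z k = C + (j:ℝ)/β := by
          rw [hzv k hk1 hkM, hkdef]; push_cast; ring_nf
        have hzk1v : z (k+1) = C + ((j:ℝ)+1)/β := by
          rw [hzv (k+1) (by omega) (by omega), hkdef]; push_cast; ring_nf
        have hzky : z k ≤ y := by
          rw [hzkv]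
          have := (div_le_iff₀ hβ0).mpr hfl
          linarith [(div_le_iff₀ hβ0).mpr hfl]
        have hzky' : z k < y := lt_of_le_of_ne hzky (fun h => hne k (by omega) h.symm)
        have hyzk1 : y < z (k+1) := by
          rw [hzk1v]
          have := (lt_div_iff₀ hβ0).mpr hfu
          linarith [(lt_div_iff₀ hβ0).mpr hfu]
        have hTy : T y = β * y - k := hTk y k hk1 hkM1 ⟨hzky, hyzk1⟩
        -- σ = L - y
        have esub1 : z (M - k) = L - z (k+1) := by
          have h := hsym (k+1) (by omega)
          have hh : M + 1 - (k+1) = M - k := by omega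
          rw [hh] at h; linarith
        have esub2 : z (M - k + 1) = L - z k := by
          have h := hsym k (by omega)
          have hh : M + 1 - k = M - k + 1 := by omega
          rw [hh] at h; linarith
        have hσlo : z (M - k) ≤ L - y := by rw [esub1]; linarith
        have hσhi : L - y < z (M - k + 1) := by rw [esub2]; linarith
        have hTσ : T (L - y) = β * (L - y) - (M - k : ℕ) :=
          hTk (L - y) (M - k) (by omega) (by omega) ⟨hσlo, hσhi⟩
        have hcast : ((M - k : ℕ):ℝ) = (M:ℝ) - k := by
          push_cast [Nat.cast_sub hkM]; ring
        have hβzk : β * z k = (L+1)/2 + (k:ℝ) - 1 := hβz k hk1 hkM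
        have hβzk1 : β * z (k+1) = (L+1)/2 + (k:ℝ) := by
          have := hβz (k+1) (by omega) (by omega); push_cast at this ⊢; linarith
        have hmul1 : β * z k ≤ β * y := mul_le_mul_of_nonneg_left hzky hβ0.le
        have hmul2 : β * y < β * z (k+1) := mul_lt_mul_of_pos_left hyzk1 hβ0
        refine ⟨by rw [hTy, hTσ, hcast]; linarith, ?_, ?_⟩
        · rw [hTy]; linarith
        · rw [hTy]; linarith
      · exact absurd hcM (hne M (by omega))
      · -- z M < y
        have hTy : T y = β * y - M := hTtop y hcM.le
        have hσ : L - y < z 1 := by linarith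
        have hTσ : T (L - y) = β * (L - y) := hT0 _ hσ
        have hβzM : β * z M = (L+1)/2 + (M:ℝ) - 1 := hβz M (by omega) le_rfl
        have hmul : β * z M < β * y := mul_lt_mul_of_pos_left hcM hβ0
        have hmul2 : β * y ≤ β * L := mul_le_mul_of_nonneg_left hyL hβ0.le
        refine ⟨by rw [hTy, hTσ]; linarith, ?_, ?_⟩
        · rw [hTy]; linarith
        · rw [hTy]; linarith
  have main : ∀ n : ℕ, T^[n] x ∈ Set.Icc 0 L ∧ T^[n] (L - x) = L - T^[n] x := by
    intro n
    induction n with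
    | zero => exact ⟨hx, rfl⟩
    | succ n ih =>
      obtain ⟨h1, h2⟩ := ih
      have hk := key _ h1 (hgen n)
      rw [Function.iterate_succ_apply', Function.iterate_succ_apply', h2, hk.1]
      exact ⟨hk.2, rfl⟩
  intro n k hk
  have h2 := (main n).2
  have e1 : z (M - k) = L - z (k+1) := by
    have h := hsym (k+1) (by omega)
    have hh : M + 1 - (k+1) = M - k := by omega
    rw [hh] at h; linarith
  have e2 : z (M - k + 1) = L - z k := by
    have h := hsym k (by omega)
    have hh : M + 1 - k = M - k + 1 := by omega
    rw [hh] at h; linarith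
  rw [h2, e1, e2]
  constructor
  · rintro ⟨a, b⟩; exact ⟨by linarith, by linarith⟩
  · rintro ⟨a, b⟩; exact ⟨by linarith, by linarith⟩
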